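/- Let V and W be finite-dimensional real vector spaces with dim V = q + 1, q ≥ 1, and let δ : V × V → W be an alternating bilinear map such that the span of its image {δ(x, y) : x, y ∈ V} has dimension q. Let B ⊆ V be a q-dimensional subspace on which δ vanishes: δ(b, b') = 0 for all b, b' ∈ B. Then: (i) every nonzero b ∈ B has degree 1, i.e. the linear map y ↦ δ(b, y) has rank exactly 1; and (ii) every X ∈ V \ B has degree q, i.e. the linear map y ↦ δ(X, y) has rank exactly q. -/
import Mathlib


/-- STATEMENT 4 (linear-algebra content of Proposition 2.7, 1) ⇒ 2)):
if `dim V = q+1`, the image of the alternating bilinear map `δ` spans a `q`-dimensional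
subspace of `W`, and `δ` vanishes on a `q`-dimensional subspace `B ⊆ V`, then every
nonzero `b ∈ B` has degree `1` and every `X ∉ B` has degree `q`. -/
theorem weber_structure_degrees
    (V W : Type*)
    [AddCommGroup V] [Module ℝ V] [FiniteDimensional ℝ V]
    [AddCommGroup W] [Module ℝ W] [FiniteDimensional ℝ W]
    (q : ℕ) (hq : 1 ≤ q) (hV : Module.finrank ℝ V = q + 1)
    (δ : V →ₗ[ℝ] V →ₗ[ℝ] W)
    (halt : ∀ x : V, δ x x = 0)
    (himage : Module.finrank ℝ
      (Submodule.span ℝ {w : W | ∃ x y : V, w = δ x y}) = q)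
    (B : Submodule ℝ V) (hB : Module.finrank ℝ B = q)
    (hvanish : ∀ b ∈ B, ∀ b' ∈ B, δ b b' = 0) :
    (∀ b ∈ B, b ≠ 0 → Module.finrank ℝ (LinearMap.range (δ b)) = 1) ∧
    (∀ X : V, X ∉ B → Module.finrank ℝ (LinearMap.range (δ X)) = q) := by
  set S := Submodule.span ℝ {w : W | ∃ x y : V, w = δ x y} with hSdef
  -- skew-symmetry
  have hskew : ∀ x y : V, δ x y = - δ y x := by
    intro x y
    have h := halt (x + y)
    simp only [map_add, LinearMap.add_apply, halt x, halt y, zero_add, add_zero] at h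
    exact eq_neg_of_add_eq_zero_right h
  -- B ≠ ⊤
  have hBne : B ≠ ⊤ := by
    intro h
    rw [h, finrank_top, hV] at hB
    omega
  obtain ⟨X₀, hX₀⟩ : ∃ x : V, x ∉ B := by
    by_contra h
    push_neg at h
    exact hBne (Submodule.eq_top_iff'.mpr h)
  have hX₀ne : X₀ ≠ 0 := fun h => hX₀ (h ▸ B.zero_mem)
  -- B ⊔ span{X₀} = ⊤
  have hsup : B ⊔ Submodule.span ℝ {X₀} = ⊤ := by
    have hlt : B < B ⊔ Submodule.span ℝ {X₀} := by
      refine lt_of_le_of_ne le_sup_left (fun h => hX₀ ?_)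
      have : X₀ ∈ B ⊔ Submodule.span ℝ {X₀} :=
        Submodule.mem_sup_right (Submodule.mem_span_singleton_self X₀)
      rwa [← h] at this
    have h1 : q < Module.finrank ℝ (B ⊔ Submodule.span ℝ {X₀} : Submodule ℝ V) := by
      rw [← hB]; exact Submodule.finrank_lt_finrank_of_lt hlt
    have h2 : Module.finrank ℝ (B ⊔ Submodule.span ℝ {X₀} : Submodule ℝ V)
        ≤ q + 1 := hV ▸ Submodule.finrank_le _
    exact Submodule.eq_top_of_finrank_eq (by omega)
  -- decomposition of any vector
  have hdec : ∀ v : V, ∃ b ∈ B, ∃ t : ℝ, v = b + t • X₀ := by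
    intro v
    have hv : v ∈ B ⊔ Submodule.span ℝ {X₀} := hsup ▸ Submodule.mem_top
    obtain ⟨b, hb, z, hz, hbz⟩ := Submodule.mem_sup.mp hv
    obtain ⟨t, rfl⟩ := Submodule.mem_span_singleton.mp hz
    exact ⟨b, hb, t, hbz.symm⟩
  -- key computation
  have hcomp : ∀ b ∈ B, ∀ b' ∈ B, ∀ t s : ℝ,
      δ (b + t • X₀) (b' + s • X₀) = δ X₀ (t • b' - s • b) := by
    intro b hb b' hb' t s
    have h1 : δ b X₀ = - δ X₀ b := hskew b X₀
    simp only [map_add, map_smul, map_sub, LinearMap.add_apply, LinearMap.smul_apply,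
      hvanish b hb b' hb', halt, h1, smul_zero, smul_neg, zero_add, add_zero]
    abel
  -- range (δ X₀) = S
  have hrange0 : LinearMap.range (δ X₀) = S := by
    apply le_antisymm
    · rintro w ⟨y, rfl⟩
      exact Submodule.subset_span ⟨X₀, y, rfl⟩
    · rw [hSdef, Submodule.span_le]
      rintro w ⟨x, y, rfl⟩
      obtain ⟨b, hb, t, rfl⟩ := hdec x
      obtain ⟨b', hb', s, rfl⟩ := hdec y
      rw [hcomp b hb b' hb' t s]
      exact ⟨t • b' - s • b, rfl⟩
  have hrank0 : Module.finrank ℝ (LinearMap.range (δ X₀)) = q := by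
    rw [hrange0]; exact himage
  -- kernel of δ X₀ is span{X₀}
  have hker : LinearMap.ker (δ X₀) = Submodule.span ℝ {X₀} := by
    have hle : Submodule.span ℝ {X₀} ≤ LinearMap.ker (δ X₀) := by
      rw [Submodule.span_le, Set.singleton_subset_iff]
      exact LinearMap.mem_ker.mpr (halt X₀)
    have hkerrank : Module.finrank ℝ (LinearMap.ker (δ X₀)) = 1 := by
      have := LinearMap.finrank_range_add_finrank_ker (δ X₀)
      rw [hrank0, hV] at this
      omega
    exact (Submodule.eq_of_le_of_finrank_eq hle
      (by rw [finrank_span_singleton hX₀ne, hkerrank])).symm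
  -- δ X₀ injective on B
  have hinjB : ∀ b ∈ B, δ X₀ b = 0 → b = 0 := by
    intro b hb hb0
    have : b ∈ Submodule.span ℝ ({X₀} : Set V) := hker ▸ LinearMap.mem_ker.mpr hb0
    obtain ⟨c, rfl⟩ := Submodule.mem_span_singleton.mp this
    rcases eq_or_ne c 0 with h | h
    · rw [h, zero_smul]
    · exact absurd (by simpa [h] using B.smul_mem c⁻¹ hb) hX₀
  refine ⟨?_, ?_⟩
  · -- degree 1 for nonzero b ∈ B
    intro b hb hbne
    have hne : δ b X₀ ≠ 0 := by
      intro h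
      rw [hskew b X₀, neg_eq_zero] at h
      exact hbne (hinjB b hb h)
    have hrange : LinearMap.range (δ b) = Submodule.span ℝ {δ b X₀} := by
      apply le_antisymm
      · rintro w ⟨y, rfl⟩
        obtain ⟨b', hb', t, rfl⟩ := hdec y
        have : δ b (b' + t • X₀) = t • δ b X₀ := by
          simp [hvanish b hb b' hb']
        rw [this]
        exact Submodule.smul_mem _ t (Submodule.mem_span_singleton_self _)
      · rw [Submodule.span_le, Set.singleton_subset_iff]
        exact ⟨X₀, rfl⟩
    rw [hrange, finrank_span_singleton hne]
  · -- degree q for X ∉ B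
    intro X hX
    obtain ⟨b, hb, c, rfl⟩ := hdec X
    have hc : c ≠ 0 := by
      intro h
      rw [h, zero_smul, add_zero] at hX
      exact hX hb
    -- lower bound via injectivity on B
    have hval : ∀ b' ∈ B, δ (b + c • X₀) b' = c • δ X₀ b' := by
      intro b' hb'
      have := hcomp b hb b' hb' c 0
      simpa using this
    set f : B →ₗ[ℝ] W := (δ (b + c • X₀)).comp B.subtype with hf
    have hfinj : Function.Injective f := by
      rw [← LinearMap.ker_eq_bot]
      rw [Submodule.eq_bot_iff]
      rintro ⟨b', hb'⟩ h
      have h' : δ (b + c • X₀) b' = 0 := h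
      rw [hval b' hb'] at h'
      have : δ X₀ b' = 0 := by
        have := smul_eq_zero.mp h'
        tauto
      exact Subtype.ext (hinjB b' hb' this)
    have hfrank : Module.finrank ℝ (LinearMap.range f) = q := by
      rw [LinearMap.finrank_range_of_inj hfinj, hB]
    have hle1 : LinearMap.range f ≤ LinearMap.range (δ (b + c • X₀)) := by
      rintro w ⟨y, rfl⟩
      exact ⟨y, rfl⟩
    have hle2 : LinearMap.range (δ (b + c • X₀)) ≤ S := by
      rintro w ⟨y, rfl⟩
      exact Submodule.subset_span ⟨b + c • X₀, y, rfl⟩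
    have h1 : q ≤ Module.finrank ℝ (LinearMap.range (δ (b + c • X₀))) :=
      hfrank ▸ Submodule.finrank_mono hle1
    have h2 : Module.finrank ℝ (LinearMap.range (δ (b + c • X₀))) ≤ q :=
      himage ▸ Submodule.finrank_mono hle2
    omega
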